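/- Let R ⊆ X × X be a set of ruled-out instrument-response types, write x ⊵ x' for (x,x') ∈ R, and for S ⊆ X let Lᶜ(S) = {x' ∈ X | ∃ s ∈ S, ¬(s ⊵ x')}. Then the following are equivalent. (i) There exists a probability measure g on T consistent with the data whose instrument-response marginal satisfies p_g tᶻ = 0 whenever (tᶻ 0, tᶻ 1) ∈ R. (ii) Both of the following families of inequalities hold: (1) for every S ⊆ X, Σ_{x ∈ S} ∫_Y φ 0 x dμ ≤ Σ_{x' ∈ Lᶜ(S)} ∫_Y φ 1 x' dμ; and (2) for every S ⊆ X and every pair of disjoint sets Λ, Λ' ⊆ X with Λ ∪ Λ' = Lᶜ(S) such that Λ' is nonempty, Λ' ⊆ S, for every x' ∈ Λ' the set Lᶜ({x'}) \ {x'} is contained in Λ, and Lᶜ(S \ Λ') ⊆ Λ, one has Σ_{x ∈ S} ∫_Y φ 0 x dμ ≤ Σ_{x ∈ Λ} ∫_Y φ 1 x dμ + Σ_{x ∈ Λ'} Ψ x. -/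

import Mathlib

open MeasureTheory
open scoped ENNReal NNReal

/-- The complement of the common lower contour of `S` under the relation `R`:
the set of `x'` such that some `s ∈ S` does **not** dominate `x'` according to `R`. -/
def lowerContourCompl {X : Type*} [Fintype X] (R : X → X → Prop) [DecidableRel R]
    (S : Finset X) : Finset X :=
  Finset.univ.filter (fun x' => ∃ s ∈ S, ¬ R s x')

namespace SharpIV


variable {X : Type*} [Fintype X] [DecidableEq X]

def row (m : X → X → ℝ) (i : X) : ℝ := ∑ j, m i j
def col (m : X → X → ℝ) (j : X) : ℝ := ∑ i, m i j

/-- bump the (i,j) entry by δ -/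
def bump (m : X → X → ℝ) (i j : X) (δ : ℝ) : X → X → ℝ :=
  fun i' j' => m i' j' + if i' = i ∧ j' = j then δ else 0

lemma bump_apply (m : X → X → ℝ) (i j : X) (δ : ℝ) (i' j' : X) :
    bump m i j δ i' j' = m i' j' + if i' = i ∧ j' = j then δ else 0 := rfl

lemma row_bump (m : X → X → ℝ) (i j : X) (δ : ℝ) (i' : X) :
    row (bump m i j δ) i' = row m i' + if i' = i then δ else 0 := by
  unfold row bump
  rw [Finset.sum_add_distrib]
  congr 1
  by_cases h : i' = i
  · simp [h]
  · simp [h]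

lemma col_bump (m : X → X → ℝ) (i j : X) (δ : ℝ) (j' : X) :
    col (bump m i j δ) j' = col m j' + if j' = j then δ else 0 := by
  unfold col bump
  rw [Finset.sum_add_distrib]
  congr 1
  by_cases h : j' = j
  · simp [h]
  · simp [h]

inductive Reach (a : X → ℝ) (cap : X → X → ℝ) (m : X → X → ℝ) : X ⊕ X → Prop
  | base (i : X) : row m i < a i → Reach a cap m (.inl i)
  | fwd (i j : X) : Reach a cap m (.inl i) → m i j < cap i j → Reach a cap m (.inr j)
  | bwd (i j : X) : Reach a cap m (.inr j) → 0 < m i j → Reach a cap m (.inl i)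

lemma augment (a : X → ℝ) (cap m : X → X → ℝ)
    (hm0 : ∀ i j, 0 ≤ m i j) (hmc : ∀ i j, m i j ≤ cap i j) (hra : ∀ i, row m i ≤ a i)
    (v : X ⊕ X) (hv : Reach a cap m v) :
    ∀ ε : ℝ, 0 < ε →
    ∃ δ : ℝ, ∃ m' : X → X → ℝ, 0 < δ ∧ δ ≤ ε ∧ (∀ i j, 0 ≤ m' i j) ∧
      (∀ i j, m' i j ≤ cap i j) ∧ (∀ i j, |m' i j - m i j| ≤ ε) ∧
      (∀ i, row m' i ≤ a i) ∧
      (Sum.elim (fun i => row m' i ≤ a i - δ ∧ ∀ j, col m' j = col m j)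
                (fun j => col m' j = col m j + δ ∧ ∀ j', j' ≠ j → col m' j' = col m j') v) := by
  induction hv with
  | base i h =>
    intro ε hε
    refine ⟨min ε (a i - row m i), m, ?_, min_le_left _ _, hm0, hmc, ?_, hra, ?_⟩
    · exact lt_min hε (by linarith)
    · intro i j; simp [abs_nonneg, le_of_lt hε]
    · refine ⟨?_, fun j => rfl⟩
      have := min_le_right ε (a i - row m i); linarith
  | fwd i j hreach hlt ih =>
    intro ε hε
    set ε₁ := min (ε/2) ((cap i j - m i j)/2) with hε₁def
    have hε₁ : 0 < ε₁ := lt_min (by linarith) (by linarith)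
    obtain ⟨δ₁, m₁, hδ₁, hδ₁ε, h0, hc, hnear, hrow, helim⟩ := ih ε₁ hε₁
    simp only [Sum.elim_inl] at helim
    obtain ⟨hrowi, hcols⟩ := helim
    refine ⟨δ₁, bump m₁ i j δ₁, hδ₁, le_trans hδ₁ε (le_trans (min_le_left _ _) (by linarith)), ?_, ?_, ?_, ?_, ?_⟩
    · intro i' j'; rw [bump_apply]
      by_cases h : i' = i ∧ j' = j
      · rw [if_pos h]; have := h0 i' j'; linarith
      · rw [if_neg h, add_zero]; exact h0 i' j'
    · intro i' j'; rw [bump_apply]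
      by_cases h : i' = i ∧ j' = j
      · obtain ⟨h1, h2⟩ := h; subst h1; subst h2
        rw [if_pos ⟨rfl, rfl⟩]
        have h3 := hnear i' j'
        have h4 : m₁ i' j' ≤ m i' j' + ε₁ := by
          have := abs_le.mp h3; linarith [this.2]
        have h5 : ε₁ ≤ (cap i' j' - m i' j')/2 := min_le_right _ _
        have h6 : δ₁ ≤ ε₁ := hδ₁ε
        linarith
      · rw [if_neg h, add_zero]; exact hc i' j'
    · intro i' j'; rw [bump_apply]
      have h3 := abs_le.mp (hnear i' j')
      have hεhalf : ε₁ ≤ ε/2 := min_le_left _ _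
      by_cases h : i' = i ∧ j' = j
      · rw [if_pos h]; rw [abs_le]; constructor <;> [skip; skip] <;> linarith [h3.1, h3.2, hδ₁ε]
      · rw [if_neg h, add_zero]; rw [abs_le]
        constructor <;> linarith [h3.1, h3.2]
    · intro i'; rw [row_bump]
      by_cases h : i' = i
      · subst h; rw [if_pos rfl]; linarith [hrowi]
      · rw [if_neg h, add_zero]; exact hrow i'
    · simp only [Sum.elim_inr]
      constructor
      · rw [col_bump]; rw [if_pos rfl]; rw [hcols j]
      · intro j' hj'; rw [col_bump]; rw [if_neg hj', add_zero]; exact hcols j'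
  | bwd i j hreach hpos ih =>
    intro ε hε
    set ε₁ := min (ε/2) (m i j / 2) with hε₁def
    have hε₁ : 0 < ε₁ := lt_min (by linarith) (by linarith)
    obtain ⟨δ₁, m₁, hδ₁, hδ₁ε, h0, hc, hnear, hrow, helim⟩ := ih ε₁ hε₁
    simp only [Sum.elim_inr] at helim
    obtain ⟨hcolj, hcols⟩ := helim
    have hmij : δ₁ ≤ m₁ i j := by
      have h3 := abs_le.mp (hnear i j)
      have h5 : ε₁ ≤ m i j / 2 := min_le_right _ _
      linarith [h3.1, hδ₁ε]
    refine ⟨δ₁, bump m₁ i j (-δ₁), hδ₁, le_trans hδ₁ε (le_trans (min_le_left _ _) (by linarith)), ?_, ?_, ?_, ?_, ?_⟩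
    · intro i' j'; rw [bump_apply]
      by_cases h : i' = i ∧ j' = j
      · obtain ⟨h1, h2⟩ := h; subst h1; subst h2; rw [if_pos ⟨rfl, rfl⟩]; linarith
      · rw [if_neg h, add_zero]; exact h0 i' j'
    · intro i' j'; rw [bump_apply]
      by_cases h : i' = i ∧ j' = j
      · rw [if_pos h]; have := hc i' j'; linarith
      · rw [if_neg h, add_zero]; exact hc i' j'
    · intro i' j'; rw [bump_apply]
      have h3 := abs_le.mp (hnear i' j')
      have hεhalf : ε₁ ≤ ε/2 := min_le_left _ _
      by_cases h : i' = i ∧ j' = j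
      · rw [if_pos h]; rw [abs_le]; constructor <;> linarith [h3.1, h3.2, hδ₁ε]
      · rw [if_neg h, add_zero]; rw [abs_le]
        constructor <;> linarith [h3.1, h3.2]
    · intro i'; rw [row_bump]
      by_cases h : i' = i
      · rw [if_pos h]; have := hrow i'; subst h; linarith
      · rw [if_neg h, add_zero]; exact hrow i'
    · simp only [Sum.elim_inl]
      constructor
      · rw [row_bump]; rw [if_pos rfl]; have := hrow i; linarith
      · intro j'; rw [col_bump]
        by_cases h : j' = j
        · subst h; rw [if_pos rfl]; rw [hcolj]; ring
        · rw [if_neg h, add_zero]; exact hcols j' h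


lemma total_eq_sum_col (m : X → X → ℝ) : ∑ i, row m i = ∑ j, col m j := by
  unfold row col; exact Finset.sum_comm

theorem hoffman (a b : X → ℝ) (cap : X → X → ℝ)
    (ha : ∀ i, 0 ≤ a i) (hb : ∀ j, 0 ≤ b j) (hcap : ∀ i j, 0 ≤ cap i j)
    (hab : ∑ i, a i = ∑ j, b j)
    (hcond : ∀ S : Finset X, ∑ i ∈ S, a i ≤ ∑ j, min (b j) (∑ i ∈ S, cap i j)) :
    ∃ m : X → X → ℝ, (∀ i j, 0 ≤ m i j) ∧ (∀ i j, m i j ≤ cap i j) ∧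
      (∀ i, row m i = a i) ∧ (∀ j, col m j = b j) := by
  classical
  set K : Set (X → X → ℝ) :=
    {m | (∀ i j, m i j ∈ Set.Icc 0 (cap i j)) ∧ (∀ i, row m i ≤ a i) ∧ (∀ j, col m j ≤ b j)}
    with hKdef
  have hKsub : K ⊆ Set.univ.pi (fun i => Set.univ.pi fun j => Set.Icc 0 (cap i j)) := by
    intro m hm
    intro i _; intro j _; exact hm.1 i j
  have hKcompact : IsCompact K := by
    refine IsCompact.of_isClosed_subset (isCompact_univ_pi fun i => isCompact_univ_pi fun j => isCompact_Icc) ?_ hKsub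
    have h1 : IsClosed {m : X → X → ℝ | ∀ i j, m i j ∈ Set.Icc 0 (cap i j)} := by
      have : {m : X → X → ℝ | ∀ i j, m i j ∈ Set.Icc 0 (cap i j)} =
          ⋂ i, ⋂ j, {m : X → X → ℝ | m i j ∈ Set.Icc 0 (cap i j)} := by
        ext m; simp
      rw [this]
      refine isClosed_iInter fun i => isClosed_iInter fun j => ?_
      exact IsClosed.preimage ((continuous_apply j).comp (continuous_apply i)) isClosed_Icc
    have hrowc : ∀ i, Continuous fun m : X → X → ℝ => row m i := by
      intro i; unfold row
      exact continuous_finset_sum _ fun j _ => (continuous_apply j).comp (continuous_apply i)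
    have hcolc : ∀ j, Continuous fun m : X → X → ℝ => col m j := by
      intro j; unfold col
      exact continuous_finset_sum _ fun i _ => (continuous_apply j).comp (continuous_apply i)
    have h2 : IsClosed {m : X → X → ℝ | ∀ i, row m i ≤ a i} := by
      have : {m : X → X → ℝ | ∀ i, row m i ≤ a i} = ⋂ i, {m | row m i ≤ a i} := by ext m; simp
      rw [this]
      exact isClosed_iInter fun i => isClosed_le (hrowc i) continuous_const
    have h3 : IsClosed {m : X → X → ℝ | ∀ j, col m j ≤ b j} := by
      have : {m : X → X → ℝ | ∀ j, col m j ≤ b j} = ⋂ j, {m | col m j ≤ b j} := by ext m; simp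
      rw [this]
      exact isClosed_iInter fun j => isClosed_le (hcolc j) continuous_const
    exact (h1.inter (h2.inter h3))
  have hKne : K.Nonempty := by
    refine ⟨fun _ _ => 0, ?_, ?_, ?_⟩
    · intro i j; exact ⟨le_refl _, hcap i j⟩
    · intro i; simpa [row] using ha i
    · intro j; simpa [col] using hb j
  have hcont : ContinuousOn (fun m : X → X → ℝ => ∑ i, row m i) K := by
    refine Continuous.continuousOn ?_
    unfold row
    exact continuous_finset_sum _ fun i _ =>
      continuous_finset_sum _ fun j _ => (continuous_apply j).comp (continuous_apply i)
  obtain ⟨m, hmK, hmax⟩ := hKcompact.exists_isMaxOn hKne hcont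
  obtain ⟨hbox, hrows, hcols⟩ := hmK
  have hm0 : ∀ i j, 0 ≤ m i j := fun i j => (hbox i j).1
  have hmc : ∀ i j, m i j ≤ cap i j := fun i j => (hbox i j).2
  -- reachable demands are saturated
  have colsat : ∀ j, Reach a cap m (.inr j) → col m j = b j := by
    intro j hr
    by_contra hne
    have hlt : col m j < b j := lt_of_le_of_ne (hcols j) hne
    obtain ⟨δ, m', hδ, hδε, h0', hc', _, hrow', helim⟩ :=
      augment a cap m hm0 hmc hrows (.inr j) hr (b j - col m j) (by linarith)
    simp only [Sum.elim_inr] at helim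
    obtain ⟨hcolj, hcolsj⟩ := helim
    have hm'K : m' ∈ K := by
      refine ⟨fun i j => ⟨h0' i j, hc' i j⟩, hrow', ?_⟩
      intro j'
      by_cases h : j' = j
      · subst h; rw [hcolj]; linarith
      · rw [hcolsj j' h]; exact hcols j'
    have := hmax hm'K
    simp only [Set.mem_setOf_eq] at this
    rw [total_eq_sum_col, total_eq_sum_col] at this
    have hsum : ∑ j', col m' j' = (∑ j', col m j') + δ := by
      have : ∀ j', col m' j' = col m j' + if j' = j then δ else 0 := by
        intro j'
        by_cases h : j' = j
        · subst h; rw [hcolj, if_pos rfl]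
        · rw [hcolsj j' h, if_neg h, add_zero]
      rw [Finset.sum_congr rfl fun j' _ => this j', Finset.sum_add_distrib]
      simp
    rw [hsum] at this
    linarith
  -- total is full
  have htotal : ∑ i, row m i = ∑ i, a i := by
    by_contra hne
    have hlt : ∑ i, row m i < ∑ i, a i :=
      lt_of_le_of_ne (Finset.sum_le_sum fun i _ => hrows i) hne
    have hex : ∃ i₀, row m i₀ < a i₀ := by
      by_contra hno
      push_neg at hno
      exact absurd (Finset.sum_le_sum fun i _ => hno i) (not_le.mpr hlt)
    obtain ⟨i₀, hi₀⟩ := hex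
    set S : Finset X := Finset.univ.filter (fun i => Reach a cap m (Sum.inl i)) with hSdef
    have hi₀S : i₀ ∈ S := by
      rw [hSdef, Finset.mem_filter]
      exact ⟨Finset.mem_univ _, Reach.base i₀ hi₀⟩
    have key : ∑ i ∈ S, row m i < ∑ i ∈ S, a i :=
      Finset.sum_lt_sum (fun i _ => hrows i) ⟨i₀, hi₀S, hi₀⟩
    have hswap : ∑ i ∈ S, row m i = ∑ j, ∑ i ∈ S, m i j := by
      unfold row; exact Finset.sum_comm
    have hjbound : ∀ j, min (b j) (∑ i ∈ S, cap i j) ≤ ∑ i ∈ S, m i j := by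
      intro j
      by_cases hrj : Reach a cap m (Sum.inr j)
      · have hzero : ∀ i ∉ S, m i j = 0 := by
          intro i hiS
          by_contra hne'
          have : 0 < m i j := lt_of_le_of_ne (hm0 i j) (Ne.symm hne')
          exact hiS (by rw [hSdef, Finset.mem_filter]; exact ⟨Finset.mem_univ _, Reach.bwd i j hrj this⟩)
        have : ∑ i ∈ S, m i j = col m j := by
          unfold col
          rw [← Finset.sum_subset (Finset.subset_univ S)]
          intro i _ hiS; exact hzero i hiS
        rw [this, colsat j hrj]
        exact min_le_left _ _
      · have hsat : ∀ i ∈ S, m i j = cap i j := by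
          intro i hiS
          by_contra hne'
          have hlt' : m i j < cap i j := lt_of_le_of_ne (hmc i j) hne'
          rw [hSdef, Finset.mem_filter] at hiS
          exact hrj (Reach.fwd i j hiS.2 hlt')
        rw [Finset.sum_congr rfl hsat]
        exact min_le_right _ _
    have : ∑ i ∈ S, a i ≤ ∑ i ∈ S, row m i := by
      calc ∑ i ∈ S, a i ≤ ∑ j, min (b j) (∑ i ∈ S, cap i j) := hcond S
      _ ≤ ∑ j, ∑ i ∈ S, m i j := Finset.sum_le_sum fun j _ => hjbound j
      _ = ∑ i ∈ S, row m i := hswap.symm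
    linarith
  -- rows are exact
  have hroweq : ∀ i, row m i = a i := by
    intro i
    by_contra hne
    have hlt : row m i < a i := lt_of_le_of_ne (hrows i) hne
    have : ∑ i, row m i < ∑ i, a i :=
      Finset.sum_lt_sum (fun i _ => hrows i) ⟨i, Finset.mem_univ _, hlt⟩
    linarith [htotal]
  have hcoleq : ∀ j, col m j = b j := by
    have htotc : ∑ j, col m j = ∑ j, b j := by
      rw [← total_eq_sum_col, htotal, hab]
    intro j
    by_contra hne
    have hlt : col m j < b j := lt_of_le_of_ne (hcols j) hne
    have : ∑ j, col m j < ∑ j, b j :=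
      Finset.sum_lt_sum (fun j _ => hcols j) ⟨j, Finset.mem_univ _, hlt⟩
    linarith
  exact ⟨m, hm0, hmc, hroweq, hcoleq⟩



lemma fin2_eq_iff {X : Type*} (f : Fin 2 → X) (x0 x1 : X) :
    f = ![x0, x1] ↔ f 0 = x0 ∧ f 1 = x1 := by
  constructor
  · intro h; subst h; simp
  · rintro ⟨h0, h1⟩
    funext i
    fin_cases i <;> simp [h0, h1]

lemma measurableSet_pi_singleton {X : Type*} [MeasurableSpace X] [MeasurableSingletonClass X]
    (tz : Fin 2 → X) : MeasurableSet {tz} := by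
  have : {tz} = (fun f : Fin 2 → X => f 0) ⁻¹' {tz 0} ∩ (fun f : Fin 2 → X => f 1) ⁻¹' {tz 1} := by
    ext f
    simp only [Set.mem_singleton_iff, Set.mem_inter_iff, Set.mem_preimage]
    constructor
    · intro h; subst h; exact ⟨rfl, rfl⟩
    · rintro ⟨h0, h1⟩; exact ((fin2_eq_iff f (tz 0) (tz 1)).mpr ⟨h0, h1⟩).trans
        ((fin2_eq_iff tz (tz 0) (tz 1)).mpr ⟨rfl, rfl⟩).symm
  rw [this]
  exact ((measurable_pi_apply 0) (measurableSet_singleton _)).inter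
    ((measurable_pi_apply 1) (measurableSet_singleton _))

section Forward

variable {Y : Type*} [MeasurableSpace Y] [Nonempty Y] (μ : Measure Y) [SigmaFinite μ]
  {X : Type*} [Fintype X] [Nonempty X] [DecidableEq X]
  [MeasurableSpace X] [MeasurableSingletonClass X]

variable (φ : Fin 2 → X → Y → NNReal) (hφ : ∀ k x, Measurable (φ k x))
  (g : Measure ((Fin 2 → X) × (X → Y)))
  (hgcons : ∀ (k : Fin 2) (x : X) (B : Set Y), MeasurableSet B →
        g {t | t.1 k = x ∧ t.2 x ∈ B} = ∫⁻ y in B, (φ k x y : ℝ≥0∞) ∂μ)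

-- measurability of the basic events
lemma meas_event (tz : Fin 2 → X) (x : X) {B : Set Y} (hB : MeasurableSet B) :
    MeasurableSet {t : (Fin 2 → X) × (X → Y) | t.1 = tz ∧ t.2 x ∈ B} := by
  have : {t : (Fin 2 → X) × (X → Y) | t.1 = tz ∧ t.2 x ∈ B}
      = ({tz} : Set (Fin 2 → X)) ×ˢ {f : X → Y | f x ∈ B} := by
    ext t; simp only [Set.mem_setOf_eq, Set.mem_prod, Set.mem_singleton_iff]
  rw [this]
  exact (measurableSet_pi_singleton tz).prod ((measurable_pi_apply x) hB)

include hgcons in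
lemma decomp0 (x : X) {B : Set Y} (hB : MeasurableSet B) :
    ∑ x1 : X, g {t | t.1 = ![x, x1] ∧ t.2 x ∈ B} = ∫⁻ y in B, (φ 0 x y : ℝ≥0∞) ∂μ := by
  classical
  rw [← hgcons 0 x B hB]
  have hset : {t : (Fin 2 → X) × (X → Y) | t.1 0 = x ∧ t.2 x ∈ B}
      = ⋃ x1 ∈ Finset.univ, {t : (Fin 2 → X) × (X → Y) | t.1 = ![x, x1] ∧ t.2 x ∈ B} := by
    ext t
    rw [Set.mem_iUnion₂]
    constructor
    · rintro ⟨h1, h2⟩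
      exact ⟨t.1 1, Finset.mem_univ _, (fin2_eq_iff _ _ _).mpr ⟨h1, rfl⟩, h2⟩
    · rintro ⟨x1, -, h1, h2⟩
      rw [fin2_eq_iff] at h1
      exact ⟨h1.1, h2⟩
  rw [hset, measure_biUnion_finset ?_ ?_]
  · intro x1 _ x2 _ hne
    simp only [Function.onFun, Set.disjoint_left]
    intro t ht1 ht2
    apply hne
    have := ht1.1.symm.trans ht2.1
    have := congrFun this 1
    simpa using this
  · intro x1 _
    exact meas_event _ _ hB

include hgcons in
lemma decomp1 (x : X) {B : Set Y} (hB : MeasurableSet B) :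
    ∑ x0 : X, g {t | t.1 = ![x0, x] ∧ t.2 x ∈ B} = ∫⁻ y in B, (φ 1 x y : ℝ≥0∞) ∂μ := by
  classical
  rw [← hgcons 1 x B hB]
  have hset : {t : (Fin 2 → X) × (X → Y) | t.1 1 = x ∧ t.2 x ∈ B}
      = ⋃ x0 ∈ Finset.univ, {t : (Fin 2 → X) × (X → Y) | t.1 = ![x0, x] ∧ t.2 x ∈ B} := by
    ext t
    rw [Set.mem_iUnion₂]
    constructor
    · rintro ⟨h1, h2⟩
      exact ⟨t.1 0, Finset.mem_univ _, (fin2_eq_iff _ _ _).mpr ⟨rfl, h1⟩, h2⟩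
    · rintro ⟨x0, -, h1, h2⟩
      rw [fin2_eq_iff] at h1
      exact ⟨h1.2, h2⟩
  rw [hset, measure_biUnion_finset ?_ ?_]
  · intro x1 _ x2 _ hne
    simp only [Function.onFun, Set.disjoint_left]
    intro t ht1 ht2
    apply hne
    have := ht1.1.symm.trans ht2.1
    have := congrFun this 0
    simpa using this
  · intro x0 _
    exact meas_event _ _ hB

include hφ hgcons in
lemma diag_le_psi (x : X) :
    g {t | t.1 = ![x, x]} ≤ ∫⁻ y, ((min (φ 0 x y) (φ 1 x y) : NNReal) : ℝ≥0∞) ∂μ := by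
  classical
  set A : Set Y := {y | φ 0 x y ≤ φ 1 x y} with hAdef
  have hA : MeasurableSet A := measurableSet_le (hφ 0 x) (hφ 1 x)
  set E : Set ((Fin 2 → X) × (X → Y)) := {t | t.1 = ![x, x]} with hEdef
  set C : Set ((Fin 2 → X) × (X → Y)) := {t | t.2 x ∈ A} with hCdef
  have hC : MeasurableSet C := (measurable_pi_apply x).comp measurable_snd hA
  have hsplit : g (E ∩ C) + g (E \ C) = g E := measure_inter_add_diff E hC
  have hEC : E ∩ C = {t | t.1 = ![x, x] ∧ t.2 x ∈ A} := by rfl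
  have hEC' : E \ C = {t | t.1 = ![x, x] ∧ t.2 x ∈ Aᶜ} := rfl
  have hb1 : g (E ∩ C) ≤ ∫⁻ y in A, (φ 0 x y : ℝ≥0∞) ∂μ := by
    rw [← decomp0 μ φ g hgcons x hA, hEC]
    exact Finset.single_le_sum (f := fun x1 => g {t | t.1 = ![x, x1] ∧ t.2 x ∈ A})
      (fun _ _ => zero_le) (Finset.mem_univ x)
  have hb2 : g (E \ C) ≤ ∫⁻ y in Aᶜ, (φ 1 x y : ℝ≥0∞) ∂μ := by
    rw [← decomp1 μ φ g hgcons x hA.compl, hEC']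
    exact Finset.single_le_sum (f := fun x0 => g {t | t.1 = ![x0, x] ∧ t.2 x ∈ Aᶜ})
      (fun _ _ => zero_le) (Finset.mem_univ x)
  have hmin1 : ∫⁻ y in A, (φ 0 x y : ℝ≥0∞) ∂μ
      = ∫⁻ y in A, ((min (φ 0 x y) (φ 1 x y) : NNReal) : ℝ≥0∞) ∂μ := by
    refine setLIntegral_congr_fun hA ?_
    intro y hy
    dsimp only
    rw [min_eq_left (show φ 0 x y ≤ φ 1 x y from hy)]
  have hmin2 : ∫⁻ y in Aᶜ, (φ 1 x y : ℝ≥0∞) ∂μ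
      = ∫⁻ y in Aᶜ, ((min (φ 0 x y) (φ 1 x y) : NNReal) : ℝ≥0∞) ∂μ := by
    refine setLIntegral_congr_fun hA.compl ?_
    intro y hy
    have : φ 1 x y ≤ φ 0 x y := le_of_not_ge hy
    dsimp only
    rw [min_eq_right this]
  calc g E = g (E ∩ C) + g (E \ C) := hsplit.symm
    _ ≤ ∫⁻ y in A, (φ 0 x y : ℝ≥0∞) ∂μ + ∫⁻ y in Aᶜ, (φ 1 x y : ℝ≥0∞) ∂μ := add_le_add hb1 hb2
    _ = ∫⁻ y in A, ((min (φ 0 x y) (φ 1 x y) : NNReal) : ℝ≥0∞) ∂μ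
        + ∫⁻ y in Aᶜ, ((min (φ 0 x y) (φ 1 x y) : NNReal) : ℝ≥0∞) ∂μ := by rw [hmin1, hmin2]
    _ = ∫⁻ y, ((min (φ 0 x y) (φ 1 x y) : NNReal) : ℝ≥0∞) ∂μ := by
        exact lintegral_add_compl _ hA

end Forward


section Back

variable {Y : Type*} [MeasurableSpace Y] [Nonempty Y] (μ : Measure Y) [SigmaFinite μ]
  {X : Type*} [Fintype X] [Nonempty X] [DecidableEq X]
  [MeasurableSpace X] [MeasurableSingletonClass X]

lemma exists_consistent (φ : Fin 2 → X → Y → NNReal) (hφ : ∀ k x, Measurable (φ k x))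
    (R : X → X → Prop) [DecidableRel R]
    (m : X → X → ℝ)
    (hm0 : ∀ i j, 0 ≤ m i j)
    (hmR : ∀ i j, R i j → m i j = 0)
    (hmdiag : ∀ x, m x x ≤ (∫⁻ y, ((min (φ 0 x y) (φ 1 x y) : NNReal) : ℝ≥0∞) ∂μ).toReal)
    (hrow : ∀ i, row m i = (∫⁻ y, (φ 0 i y : ℝ≥0∞) ∂μ).toReal)
    (hcol : ∀ j, col m j = (∫⁻ y, (φ 1 j y : ℝ≥0∞) ∂μ).toReal)
    (hmass : ∀ k : Fin 2, ∑ x : X, ∫⁻ y, (φ k x y : ℝ≥0∞) ∂μ = 1) :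
    ∃ g : Measure ((Fin 2 → X) × (X → Y)), IsProbabilityMeasure g ∧
      (∀ (k : Fin 2) (x : X) (B : Set Y), MeasurableSet B →
        g {t | t.1 k = x ∧ t.2 x ∈ B} = ∫⁻ y in B, (φ k x y : ℝ≥0∞) ∂μ) ∧
      (∀ tz : Fin 2 → X, R (tz 0) (tz 1) → g {t | t.1 = tz} = 0) := by
  classical
  set y0 : Y := Classical.arbitrary Y with hy0
  -- basic ENNReal quantities
  set A0 : X → ℝ≥0∞ := fun x => ∫⁻ y, (φ 0 x y : ℝ≥0∞) ∂μ with hA0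
  set A1 : X → ℝ≥0∞ := fun x => ∫⁻ y, (φ 1 x y : ℝ≥0∞) ∂μ with hA1
  set Ψ : X → ℝ≥0∞ := fun x => ∫⁻ y, ((min (φ 0 x y) (φ 1 x y) : NNReal) : ℝ≥0∞) ∂μ with hΨ
  have hA0le1 : ∀ x, A0 x ≤ 1 := by
    intro x; rw [← hmass 0]
    exact Finset.single_le_sum (fun i _ => zero_le) (Finset.mem_univ x)
  have hA1le1 : ∀ x, A1 x ≤ 1 := by
    intro x; rw [← hmass 1]
    exact Finset.single_le_sum (fun i _ => zero_le) (Finset.mem_univ x)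
  have hA0top : ∀ x, A0 x ≠ ∞ := fun x => ((hA0le1 x).trans_lt ENNReal.one_lt_top).ne
  have hA1top : ∀ x, A1 x ≠ ∞ := fun x => ((hA1le1 x).trans_lt ENNReal.one_lt_top).ne
  have hΨle0 : ∀ x, Ψ x ≤ A0 x := fun x =>
    lintegral_mono fun y => ENNReal.coe_le_coe.mpr (min_le_left _ _)
  have hΨle1 : ∀ x, Ψ x ≤ A1 x := fun x =>
    lintegral_mono fun y => ENNReal.coe_le_coe.mpr (min_le_right _ _)
  have hΨtop : ∀ x, Ψ x ≠ ∞ := fun x => ((hΨle0 x).trans_lt (hA0top x).lt_top).ne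
  -- ENNReal version of the flow
  set M : X → X → ℝ≥0∞ := fun i j => ENNReal.ofReal (m i j) with hM
  have hMtop : ∀ i j, M i j ≠ ∞ := fun i j => ENNReal.ofReal_ne_top
  have hMR : ∀ i j, R i j → M i j = 0 := by
    intro i j h; rw [hM]; simp [hmR i j h]
  have hMdiagΨ : ∀ x, M x x ≤ Ψ x := fun x => ENNReal.ofReal_le_of_le_toReal (hmdiag x)
  have hMrow : ∀ i, ∑ j, M i j = A0 i := by
    intro i
    rw [hM]
    rw [← ENNReal.ofReal_sum_of_nonneg (fun j _ => hm0 i j)]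
    show ENNReal.ofReal (row m i) = A0 i
    rw [hrow i, ENNReal.ofReal_toReal (hA0top i)]
  have hMcol : ∀ j, ∑ i, M i j = A1 j := by
    intro j
    rw [hM]
    rw [← ENNReal.ofReal_sum_of_nonneg (fun i _ => hm0 i j)]
    show ENNReal.ofReal (col m j) = A1 j
    rw [hcol j, ENNReal.ofReal_toReal (hA1top j)]
  have hMle_row : ∀ i j, M i j ≤ A0 i := by
    intro i j; rw [← hMrow i]
    exact Finset.single_le_sum (f := fun j => M i j) (fun k _ => zero_le) (Finset.mem_univ j)
  have hMle_col : ∀ i j, M i j ≤ A1 j := by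
    intro i j; rw [← hMcol j]
    exact Finset.single_le_sum (f := fun i => M i j) (fun k _ => zero_le) (Finset.mem_univ i)
  -- the measures
  set D0 : X → Measure Y := fun x => μ.withDensity (fun y => (φ 0 x y : ℝ≥0∞)) with hD0
  set D1 : X → Measure Y := fun x => μ.withDensity (fun y => (φ 1 x y : ℝ≥0∞)) with hD1
  set Dm : X → Measure Y :=
    fun x => μ.withDensity (fun y => ((min (φ 0 x y) (φ 1 x y) : NNReal) : ℝ≥0∞)) with hDm
  have hD0univ : ∀ x, D0 x Set.univ = A0 x := by
    intro x; rw [hD0]; rw [withDensity_apply _ MeasurableSet.univ, Measure.restrict_univ]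
  have hD1univ : ∀ x, D1 x Set.univ = A1 x := by
    intro x; rw [hD1]; rw [withDensity_apply _ MeasurableSet.univ, Measure.restrict_univ]
  have hDmuniv : ∀ x, Dm x Set.univ = Ψ x := by
    intro x; rw [hDm]; rw [withDensity_apply _ MeasurableSet.univ, Measure.restrict_univ]
  have hDm_le0 : ∀ x, Dm x ≤ D0 x := fun x =>
    withDensity_mono (Filter.Eventually.of_forall fun y => ENNReal.coe_le_coe.mpr (min_le_left _ _))
  have hDm_le1 : ∀ x, Dm x ≤ D1 x := fun x =>
    withDensity_mono (Filter.Eventually.of_forall fun y => ENNReal.coe_le_coe.mpr (min_le_right _ _))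
  -- the diagonal measure
  set lam : X → Measure Y := fun x => (M x x / Ψ x) • Dm x with hlam
  have hlam_scal_le_one : ∀ x, M x x / Ψ x ≤ 1 :=
    fun x => le_trans (ENNReal.div_le_div_right (hMdiagΨ x) _) ENNReal.div_self_le_one
  have hlam_le_Dm : ∀ x, lam x ≤ Dm x := by
    intro x
    rw [Measure.le_iff']
    intro s
    rw [hlam]
    show M x x / Ψ x * Dm x s ≤ Dm x s
    exact mul_le_of_le_one_left (zero_le) (hlam_scal_le_one x)
  have hlam_le0 : ∀ x, lam x ≤ D0 x := fun x => (hlam_le_Dm x).trans (hDm_le0 x)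
  have hlam_le1 : ∀ x, lam x ≤ D1 x := fun x => (hlam_le_Dm x).trans (hDm_le1 x)
  have hlam_apply : ∀ x s, lam x s = M x x / Ψ x * Dm x s := by
    intro x s; rw [hlam]; rfl
  have hlam_univ : ∀ x, lam x Set.univ = M x x := by
    intro x
    rw [hlam_apply, hDmuniv]
    by_cases h : Ψ x = 0
    · have : M x x = 0 := le_antisymm (h ▸ hMdiagΨ x) (zero_le)
      rw [h, this]; simp
    · exact ENNReal.div_mul_cancel h (hΨtop x)
  have hlamR : ∀ x, R x x → lam x = 0 := by
    intro x h
    have : M x x = 0 := hMR x x h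
    rw [hlam]
    show (M x x / Ψ x) • Dm x = 0
    rw [this, ENNReal.zero_div, zero_smul]
  have hlamfin : ∀ x, IsFiniteMeasure (lam x) := by
    intro x
    constructor
    rw [hlam_univ x]
    exact (hMtop x x).lt_top
  -- remainder measures
  set ρ0 : X → Measure Y := fun x => D0 x - lam x with hρ0
  set ρ1 : X → Measure Y := fun x => D1 x - lam x with hρ1
  have hρ0_apply : ∀ x s, MeasurableSet s → ρ0 x s = D0 x s - lam x s := by
    intro x s hs
    haveI := hlamfin x
    rw [hρ0]
    exact Measure.sub_apply hs (hlam_le0 x)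
  have hρ1_apply : ∀ x s, MeasurableSet s → ρ1 x s = D1 x s - lam x s := by
    intro x s hs
    haveI := hlamfin x
    rw [hρ1]
    exact Measure.sub_apply hs (hlam_le1 x)
  have hρ0_le : ∀ x, ρ0 x ≤ D0 x := fun x => Measure.sub_le
  have hρ1_le : ∀ x, ρ1 x ≤ D1 x := fun x => Measure.sub_le
  have hρ0top : ∀ x, ρ0 x Set.univ ≠ ∞ := by
    intro x
    have hD : D0 x Set.univ ≠ ∞ := by rw [hD0univ]; exact hA0top x
    exact ((Measure.le_iff'.mp (hρ0_le x) Set.univ).trans_lt hD.lt_top).ne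
  have hρ1top : ∀ x, ρ1 x Set.univ ≠ ∞ := by
    intro x
    have hD : D1 x Set.univ ≠ ∞ := by rw [hD1univ]; exact hA1top x
    exact ((Measure.le_iff'.mp (hρ1_le x) Set.univ).trans_lt hD.lt_top).ne
  have hadd0 : ∀ x s, MeasurableSet s → lam x s + ρ0 x s = D0 x s := by
    intro x s hs
    rw [hρ0_apply x s hs]
    exact add_tsub_cancel_of_le (Measure.le_iff'.mp (hlam_le0 x) s)
  have hadd1 : ∀ x s, MeasurableSet s → lam x s + ρ1 x s = D1 x s := by
    intro x s hs
    rw [hρ1_apply x s hs]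
    exact add_tsub_cancel_of_le (Measure.le_iff'.mp (hlam_le1 x) s)
  have hρ0univ : ∀ x, ρ0 x Set.univ = A0 x - M x x := by
    intro x; rw [hρ0_apply x _ MeasurableSet.univ, hD0univ, hlam_univ]
  have hρ1univ : ∀ x, ρ1 x Set.univ = A1 x - M x x := by
    intro x; rw [hρ1_apply x _ MeasurableSet.univ, hD1univ, hlam_univ]
  -- sum of off-diagonal masses
  have hMsum_erase_row : ∀ x, ∑ x1 ∈ Finset.univ.erase x, M x x1 = ρ0 x Set.univ := by
    intro x
    rw [hρ0univ, ← hMrow x, ← Finset.add_sum_erase Finset.univ (M x) (Finset.mem_univ x)]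
    rw [ENNReal.add_sub_cancel_left (hMtop x x)]
  have hMsum_erase_col : ∀ x, ∑ x0 ∈ Finset.univ.erase x, M x0 x = ρ1 x Set.univ := by
    intro x
    rw [hρ1univ, ← hMcol x, ← Finset.add_sum_erase Finset.univ (fun i => M i x) (Finset.mem_univ x)]
    rw [ENNReal.add_sub_cancel_left (hMtop x x)]
  have hMle_ρ0 : ∀ x x1, x1 ≠ x → M x x1 ≤ ρ0 x Set.univ := by
    intro x x1 h
    rw [← hMsum_erase_row x]
    exact Finset.single_le_sum (f := fun x1 => M x x1) (fun k _ => zero_le)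
      (Finset.mem_erase.mpr ⟨h, Finset.mem_univ _⟩)
  have hMle_ρ1 : ∀ x0 x, x0 ≠ x → M x0 x ≤ ρ1 x Set.univ := by
    intro x0 x h
    rw [← hMsum_erase_col x]
    exact Finset.single_le_sum (f := fun x0 => M x0 x) (fun k _ => zero_le)
      (Finset.mem_erase.mpr ⟨h, Finset.mem_univ _⟩)
  -- the split measures
  set al : X → X → Measure Y := fun x0 x1 => (M x0 x1 / ρ0 x0 Set.univ) • ρ0 x0 with hal
  set be : X → X → Measure Y := fun x0 x1 => (M x0 x1 / ρ1 x1 Set.univ) • ρ1 x1 with hbe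
  have hal_apply : ∀ x0 x1 s, al x0 x1 s = M x0 x1 / ρ0 x0 Set.univ * ρ0 x0 s := fun _ _ _ => rfl
  have hbe_apply : ∀ x0 x1 s, be x0 x1 s = M x0 x1 / ρ1 x1 Set.univ * ρ1 x1 s := fun _ _ _ => rfl
  clear_value al be ρ0 ρ1 lam Dm D0 D1 A0 A1 Ψ M
  have div_mul_self : ∀ (c v : ℝ≥0∞), c ≤ v → v ≠ ∞ → c / v * v = c := by
    intro c v hle htop
    by_cases h : v = 0
    · subst h
      have : c = 0 := le_antisymm hle (zero_le)
      simp [this]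
    · exact ENNReal.div_mul_cancel h htop
  have hal_univ : ∀ x0 x1, x1 ≠ x0 → al x0 x1 Set.univ = M x0 x1 := by
    intro x0 x1 h
    rw [hal_apply]
    exact div_mul_self _ _ (hMle_ρ0 x0 x1 h) (hρ0top x0)
  have hbe_univ : ∀ x0 x1, x0 ≠ x1 → be x0 x1 Set.univ = M x0 x1 := by
    intro x0 x1 h
    rw [hbe_apply]
    exact div_mul_self _ _ (hMle_ρ1 x0 x1 h) (hρ1top x1)
  have hal_sum : ∀ x s, ∑ x1 ∈ Finset.univ.erase x, al x x1 s = ρ0 x s := by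
    intro x s
    have : ∀ x1, al x x1 s = M x x1 * ((ρ0 x Set.univ)⁻¹ * ρ0 x s) := by
      intro x1; rw [hal_apply, ENNReal.div_eq_inv_mul]; ring
    rw [Finset.sum_congr rfl fun x1 _ => this x1, ← Finset.sum_mul, hMsum_erase_row x]
    by_cases h : ρ0 x Set.univ = 0
    · have hs0 : ρ0 x s = 0 :=
        le_antisymm (le_trans (measure_mono (Set.subset_univ s)) h.le) (zero_le)
      rw [h, hs0]; simp
    · rw [← mul_assoc, ENNReal.mul_inv_cancel h (hρ0top x), one_mul]
  have hbe_sum : ∀ x s, ∑ x0 ∈ Finset.univ.erase x, be x0 x s = ρ1 x s := by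
    intro x s
    have : ∀ x0, be x0 x s = M x0 x * ((ρ1 x Set.univ)⁻¹ * ρ1 x s) := by
      intro x0; rw [hbe_apply, ENNReal.div_eq_inv_mul]; ring
    rw [Finset.sum_congr rfl fun x0 _ => this x0, ← Finset.sum_mul, hMsum_erase_col x]
    by_cases h : ρ1 x Set.univ = 0
    · have hs0 : ρ1 x s = 0 :=
        le_antisymm (le_trans (measure_mono (Set.subset_univ s)) h.le) (zero_le)
      rw [h, hs0]; simp
    · rw [← mul_assoc, ENNReal.mul_inv_cancel h (hρ1top x), one_mul]
  -- maps into function space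
  set embD : X → Y → (X → Y) := fun x y => Function.update (fun _ => y0) x y with hembD
  set embO : X → X → Y × Y → (X → Y) :=
    fun x0 x1 p => Function.update (Function.update (fun _ => y0) x0 p.1) x1 p.2 with hembO
  have hembD_meas : ∀ x, Measurable (embD x) := by
    intro x; rw [hembD]; exact measurable_update _
  have hembO_meas : ∀ x0 x1, Measurable (embO x0 x1) := by
    intro x0 x1
    rw [hembO]
    refine measurable_pi_lambda _ fun z => ?_
    simp only [Function.update_apply]
    by_cases h1 : z = x1
    · simp only [h1, if_true]; exact measurable_snd
    · simp only [h1, if_false]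
      by_cases h0 : z = x0
      · simp only [h0, if_true]; exact measurable_fst
      · simp only [h0, if_false]; exact measurable_const
  -- the component measures on X → Y
  set F : X → X → Measure (X → Y) := fun x0 x1 =>
    if x0 = x1 then Measure.map (embD x0) (lam x0)
    else (M x0 x1)⁻¹ • Measure.map (embO x0 x1) ((al x0 x1).prod (be x0 x1)) with hF
  clear_value F
  -- coordinate event
  have hcoord_meas : ∀ (x : X) (B : Set Y), MeasurableSet B →
      MeasurableSet {f : X → Y | f x ∈ B} := by
    intro x B hB
    exact (measurable_pi_apply x) hB
  have albe_sfin : ∀ x0 x1, x0 ≠ x1 → IsFiniteMeasure (be x0 x1) := by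
    intro x0 x1 h
    constructor
    rw [hbe_univ x0 x1 h]
    exact (hMtop x0 x1).lt_top
  have hal_zero_of_M : ∀ x0 x1, M x0 x1 = 0 → al x0 x1 = 0 := by
    intro x0 x1 h
    rw [hal]
    show (M x0 x1 / ρ0 x0 Set.univ) • ρ0 x0 = 0
    rw [h, ENNReal.zero_div, zero_smul]
  -- key evaluations of F
  have hFdiag : ∀ x (s : Set Y), MeasurableSet s →
      F x x {f : X → Y | f x ∈ s} = lam x s := by
    intro x s hs
    simp only [hF, if_true]
    rw [Measure.map_apply (hembD_meas x) (hcoord_meas x s hs)]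
    congr 1
    ext y
    simp [hembD, Function.update_self]
  have hFoff0 : ∀ x0 x1, x0 ≠ x1 → ∀ (s : Set Y), MeasurableSet s →
      F x0 x1 {f : X → Y | f x0 ∈ s} = al x0 x1 s := by
    intro x0 x1 h s hs
    haveI := albe_sfin x0 x1 h
    haveI : SFinite (be x0 x1) := inferInstance
    simp only [hF]
    rw [if_neg h]
    rw [Measure.smul_apply, Measure.map_apply (hembO_meas x0 x1) (hcoord_meas x0 s hs)]
    have hpre : embO x0 x1 ⁻¹' {f : X → Y | f x0 ∈ s} = s ×ˢ Set.univ := by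
      ext p
      simp only [Set.mem_preimage, Set.mem_setOf_eq, Set.mem_prod, Set.mem_univ, and_true, hembO]
      rw [Function.update_of_ne h, Function.update_self]
    rw [hpre, Measure.prod_prod (μ := al x0 x1) (ν := be x0 x1), hbe_univ x0 x1 h, smul_eq_mul]
    by_cases hM0 : M x0 x1 = 0
    · rw [hM0, hal_zero_of_M x0 x1 hM0]; simp
    · rw [mul_comm (al x0 x1 s), ← mul_assoc, ENNReal.inv_mul_cancel hM0 (hMtop x0 x1), one_mul]
  have hFoff1 : ∀ x0 x1, x0 ≠ x1 → ∀ (s : Set Y), MeasurableSet s →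
      F x0 x1 {f : X → Y | f x1 ∈ s} = be x0 x1 s := by
    intro x0 x1 h s hs
    haveI := albe_sfin x0 x1 h
    haveI : SFinite (be x0 x1) := inferInstance
    simp only [hF]
    rw [if_neg h]
    rw [Measure.smul_apply, Measure.map_apply (hembO_meas x0 x1) (hcoord_meas x1 s hs)]
    have hpre : embO x0 x1 ⁻¹' {f : X → Y | f x1 ∈ s} = Set.univ ×ˢ s := by
      ext p
      simp only [Set.mem_preimage, Set.mem_setOf_eq, Set.mem_prod, Set.mem_univ, true_and, hembO]
      rw [Function.update_self]
    rw [hpre, Measure.prod_prod (μ := al x0 x1) (ν := be x0 x1), hal_univ x0 x1 (Ne.symm h), smul_eq_mul]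
    by_cases hM0 : M x0 x1 = 0
    · have : be x0 x1 = 0 := by
        rw [hbe]
        show (M x0 x1 / ρ1 x1 Set.univ) • ρ1 x1 = 0
        rw [hM0, ENNReal.zero_div, zero_smul]
      rw [hM0, this]; simp
    · rw [← mul_assoc, ENNReal.inv_mul_cancel hM0 (hMtop x0 x1), one_mul]
  have hFuniv : ∀ x0 x1, F x0 x1 Set.univ = M x0 x1 := by
    intro x0 x1
    by_cases h : x0 = x1
    · subst h
      have : (Set.univ : Set (X → Y)) = {f : X → Y | f x0 ∈ Set.univ} := by simp
      rw [this, hFdiag x0 Set.univ MeasurableSet.univ, hlam_univ]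
    · have : (Set.univ : Set (X → Y)) = {f : X → Y | f x0 ∈ Set.univ} := by simp
      rw [this, hFoff0 x0 x1 h Set.univ MeasurableSet.univ, hal_univ x0 x1 (Ne.symm h)]
  -- the final measure
  set g : Measure ((Fin 2 → X) × (X → Y)) :=
    ∑ x0 : X, ∑ x1 : X, (Measure.dirac ![x0, x1]).prod (F x0 x1) with hg
  clear_value g
  have hg_apply : ∀ (s : Set ((Fin 2 → X) × (X → Y))),
      g s = ∑ x0 : X, ∑ x1 : X, ((Measure.dirac ![x0, x1]).prod (F x0 x1)) s := by
    intro s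
    rw [hg, Measure.finset_sum_apply]
    exact Finset.sum_congr rfl fun x0 _ => Measure.finset_sum_apply _ _ _
  -- product sets
  have hprod_eval : ∀ (x0 x1 : X) (S1 : Set (Fin 2 → X)) (S2 : Set (X → Y)),
      MeasurableSet S1 →
      ((Measure.dirac ![x0, x1]).prod (F x0 x1)) (S1 ×ˢ S2)
        = (if ![x0, x1] ∈ S1 then 1 else 0) * F x0 x1 S2 := by
    intro x0 x1 S1 S2 hS1
    haveI : IsFiniteMeasure (F x0 x1) := by
      constructor
      rw [hFuniv]
      exact (hMtop x0 x1).lt_top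
    rw [Measure.prod_prod, Measure.dirac_apply' _ hS1]
    rw [Set.indicator_apply]
    simp only [Pi.one_apply]
  refine ⟨g, ?_, ?_, ?_⟩
  · -- probability
    constructor
    have huniv : (Set.univ : Set ((Fin 2 → X) × (X → Y)))
        = (Set.univ : Set (Fin 2 → X)) ×ˢ (Set.univ : Set (X → Y)) := by simp
    rw [huniv, hg_apply]
    have : ∀ x0 x1 : X, ((Measure.dirac ![x0, x1]).prod (F x0 x1))
        ((Set.univ : Set (Fin 2 → X)) ×ˢ (Set.univ : Set (X → Y))) = M x0 x1 := by
      intro x0 x1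
      rw [hprod_eval x0 x1 _ _ MeasurableSet.univ, hFuniv]
      simp
    rw [Finset.sum_congr rfl fun x0 _ => Finset.sum_congr rfl fun x1 _ => this x0 x1]
    have : ∀ x0, ∑ x1, M x0 x1 = A0 x0 := hMrow
    rw [Finset.sum_congr rfl fun x0 _ => this x0]
    simp only [hA0]
    exact hmass 0
  · -- consistency
    intro k x B hB
    have hsplit : {t : (Fin 2 → X) × (X → Y) | t.1 k = x ∧ t.2 x ∈ B}
        = {tz : Fin 2 → X | tz k = x} ×ˢ {f : X → Y | f x ∈ B} := rfl
    have hS1meas : MeasurableSet {tz : Fin 2 → X | tz k = x} := by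
      have : {tz : Fin 2 → X | tz k = x} = (fun f : Fin 2 → X => f k) ⁻¹' {x} := rfl
      rw [this]; exact (measurable_pi_apply k) (measurableSet_singleton x)
    rw [hsplit, hg_apply]
    have heval : ∀ x0 x1, ((Measure.dirac ![x0, x1]).prod (F x0 x1))
        ({tz : Fin 2 → X | tz k = x} ×ˢ {f : X → Y | f x ∈ B})
        = (if ![x0, x1] k = x then 1 else 0) * F x0 x1 {f : X → Y | f x ∈ B} := by
      intro x0 x1
      rw [hprod_eval x0 x1 _ _ hS1meas]
      simp only [Set.mem_setOf_eq]
    rw [Finset.sum_congr rfl fun x0 _ => Finset.sum_congr rfl fun x1 _ => heval x0 x1]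
    have hk01 : k = 0 ∨ k = 1 := by fin_cases k <;> [exact Or.inl rfl; exact Or.inr rfl]
    rcases hk01 with hk | hk <;> subst hk
    · -- k = 0
      have h0 : ∀ x0 x1 : X, (![x0, x1] : Fin 2 → X) 0 = x0 := by intro x0 x1; simp
      have hcollapse : ∀ x0 x1 : X,
          (if (![x0, x1] : Fin 2 → X) 0 = x then (1:ℝ≥0∞) else 0) * F x0 x1 {f : X → Y | f x ∈ B}
          = if x0 = x then F x0 x1 {f : X → Y | f x ∈ B} else 0 := by
        intro x0 x1
        rw [h0]
        by_cases h : x0 = x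
        · rw [if_pos h, if_pos h, one_mul]
        · rw [if_neg h, if_neg h, zero_mul]
      rw [Finset.sum_congr rfl fun x0 _ => Finset.sum_congr rfl fun x1 _ => hcollapse x0 x1]
      rw [Finset.sum_comm]
      have hinner : ∀ x1 : X, ∑ x0 : X, (if x0 = x then F x0 x1 {f : X → Y | f x ∈ B} else 0)
          = F x x1 {f : X → Y | f x ∈ B} := by
        intro x1
        rw [Finset.sum_ite_eq' Finset.univ x (fun x0 => F x0 x1 {f : X → Y | f x ∈ B})]
        simp
      rw [Finset.sum_congr rfl fun x1 _ => hinner x1]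
      rw [← Finset.add_sum_erase Finset.univ _ (Finset.mem_univ x)]
      rw [hFdiag x B hB]
      have : ∀ x1 ∈ Finset.univ.erase x, F x x1 {f : X → Y | f x ∈ B} = al x x1 B := by
        intro x1 hx1
        exact hFoff0 x x1 (Ne.symm (Finset.mem_erase.mp hx1).1) B hB
      rw [Finset.sum_congr rfl this, hal_sum x B, hadd0 x B hB]
      rw [hD0]
      show μ.withDensity (fun y => (φ 0 x y : ℝ≥0∞)) B = _
      rw [withDensity_apply _ hB]
    · -- k = 1
      have h1 : ∀ x0 x1 : X, (![x0, x1] : Fin 2 → X) 1 = x1 := by intro x0 x1; simp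
      have hcollapse : ∀ x0 x1 : X,
          (if (![x0, x1] : Fin 2 → X) 1 = x then (1:ℝ≥0∞) else 0) * F x0 x1 {f : X → Y | f x ∈ B}
          = if x1 = x then F x0 x1 {f : X → Y | f x ∈ B} else 0 := by
        intro x0 x1
        rw [h1]
        by_cases h : x1 = x
        · rw [if_pos h, if_pos h, one_mul]
        · rw [if_neg h, if_neg h, zero_mul]
      rw [Finset.sum_congr rfl fun x0 _ => Finset.sum_congr rfl fun x1 _ => hcollapse x0 x1]
      have hinner : ∀ x0 : X, ∑ x1 : X, (if x1 = x then F x0 x1 {f : X → Y | f x ∈ B} else 0)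
          = F x0 x {f : X → Y | f x ∈ B} := by
        intro x0
        rw [Finset.sum_ite_eq' Finset.univ x (fun x1 => F x0 x1 {f : X → Y | f x ∈ B})]
        simp
      rw [Finset.sum_congr rfl fun x0 _ => hinner x0]
      rw [← Finset.add_sum_erase Finset.univ _ (Finset.mem_univ x)]
      rw [hFdiag x B hB]
      have : ∀ x0 ∈ Finset.univ.erase x, F x0 x {f : X → Y | f x ∈ B} = be x0 x B := by
        intro x0 hx0
        exact hFoff1 x0 x (Finset.mem_erase.mp hx0).1 B hB
      rw [Finset.sum_congr rfl this, hbe_sum x B, hadd1 x B hB]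
      rw [hD1]
      show μ.withDensity (fun y => (φ 1 x y : ℝ≥0∞)) B = _
      rw [withDensity_apply _ hB]
  · -- nullity on ruled-out types
    intro tz hR
    have hsplit : {t : (Fin 2 → X) × (X → Y) | t.1 = tz}
        = ({tz} : Set (Fin 2 → X)) ×ˢ (Set.univ : Set (X → Y)) := by
      ext t
      simp only [Set.mem_setOf_eq, Set.mem_prod, Set.mem_singleton_iff, Set.mem_univ, and_true]
    have hS1meas : MeasurableSet ({tz} : Set (Fin 2 → X)) := by
      have : ({tz} : Set (Fin 2 → X)) = (fun f : Fin 2 → X => f 0) ⁻¹' {tz 0}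
          ∩ (fun f : Fin 2 → X => f 1) ⁻¹' {tz 1} := by
        ext f
        simp only [Set.mem_singleton_iff, Set.mem_inter_iff, Set.mem_preimage]
        constructor
        · intro h; subst h; exact ⟨rfl, rfl⟩
        · rintro ⟨h0, h1⟩
          exact ((fin2_eq_iff f (tz 0) (tz 1)).mpr ⟨h0, h1⟩).trans
            ((fin2_eq_iff tz (tz 0) (tz 1)).mpr ⟨rfl, rfl⟩).symm
      rw [this]
      exact ((measurable_pi_apply 0) (measurableSet_singleton _)).inter
        ((measurable_pi_apply 1) (measurableSet_singleton _))
    rw [hsplit, hg_apply]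
    refine Finset.sum_eq_zero fun x0 _ => Finset.sum_eq_zero fun x1 _ => ?_
    rw [hprod_eval x0 x1 _ _ hS1meas]
    by_cases h : (![x0, x1] : Fin 2 → X) = tz
    · have h0 : tz 0 = x0 := by rw [← h]; simp
      have h1 : tz 1 = x1 := by rw [← h]; simp
      have : M x0 x1 = 0 := by
        apply hMR
        rw [← h0, ← h1]
        exact hR
      rw [hFuniv, this, mul_zero]
    · rw [if_neg (by simpa using h), zero_mul]

end Back


section Bridge

variable {Y : Type*} [MeasurableSpace Y] [Nonempty Y] (μ : Measure Y) [SigmaFinite μ]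
  {X : Type*} [Fintype X] [Nonempty X] [DecidableEq X]
  [MeasurableSpace X] [MeasurableSingletonClass X]

lemma hcond_of_ineqs (φ : Fin 2 → X → Y → NNReal)
    (hmass : ∀ k : Fin 2, ∑ x : X, ∫⁻ y, (φ k x y : ℝ≥0∞) ∂μ = 1)
    (R : X → X → Prop) [DecidableRel R]
    (h1 : ∀ S : Finset X,
        ∑ x ∈ S, ∫⁻ y, (φ 0 x y : ℝ≥0∞) ∂μ ≤
          ∑ x' ∈ lowerContourCompl R S, ∫⁻ y, (φ 1 x' y : ℝ≥0∞) ∂μ)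
    (h2 : ∀ S Λ Λ' : Finset X, Disjoint Λ Λ' → Λ ∪ Λ' = lowerContourCompl R S →
        Λ'.Nonempty → Λ' ⊆ S →
        (∀ x' ∈ Λ', (lowerContourCompl R {x'}).erase x' ⊆ Λ) →
        lowerContourCompl R (S \ Λ') ⊆ Λ →
        ∑ x ∈ S, ∫⁻ y, (φ 0 x y : ℝ≥0∞) ∂μ ≤
          (∑ x ∈ Λ, ∫⁻ y, (φ 1 x y : ℝ≥0∞) ∂μ) +
            ∑ x ∈ Λ', ∫⁻ y, ((min (φ 0 x y) (φ 1 x y) : NNReal) : ℝ≥0∞) ∂μ) :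
    ∀ S : Finset X,
      ∑ i ∈ S, (∫⁻ y, (φ 0 i y : ℝ≥0∞) ∂μ).toReal ≤
        ∑ j, min (∫⁻ y, (φ 1 j y : ℝ≥0∞) ∂μ).toReal
          (∑ i ∈ S, (if i = j then
              (if R i i then 0 else (∫⁻ y, ((min (φ 0 i y) (φ 1 i y) : NNReal) : ℝ≥0∞) ∂μ).toReal)
            else (if R i j then 0 else 2))) := by
  classical
  set A0 : X → ℝ≥0∞ := fun x => ∫⁻ y, (φ 0 x y : ℝ≥0∞) ∂μ with hA0
  set A1 : X → ℝ≥0∞ := fun x => ∫⁻ y, (φ 1 x y : ℝ≥0∞) ∂μ with hA1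
  set Ψ : X → ℝ≥0∞ := fun x => ∫⁻ y, ((min (φ 0 x y) (φ 1 x y) : NNReal) : ℝ≥0∞) ∂μ with hΨ
  have hA0le1 : ∀ x, A0 x ≤ 1 := by
    intro x; rw [hA0, ← hmass 0]
    exact Finset.single_le_sum (f := fun x => ∫⁻ y, (φ 0 x y : ℝ≥0∞) ∂μ)
      (fun i _ => zero_le) (Finset.mem_univ x)
  have hA1le1 : ∀ x, A1 x ≤ 1 := by
    intro x; rw [hA1, ← hmass 1]
    exact Finset.single_le_sum (f := fun x => ∫⁻ y, (φ 1 x y : ℝ≥0∞) ∂μ)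
      (fun i _ => zero_le) (Finset.mem_univ x)
  have hA0top : ∀ x, A0 x ≠ ∞ := fun x => ((hA0le1 x).trans_lt ENNReal.one_lt_top).ne
  have hA1top : ∀ x, A1 x ≠ ∞ := fun x => ((hA1le1 x).trans_lt ENNReal.one_lt_top).ne
  have hΨle0 : ∀ x, Ψ x ≤ A0 x := fun x =>
    lintegral_mono fun y => ENNReal.coe_le_coe.mpr (min_le_left _ _)
  have hΨtop : ∀ x, Ψ x ≠ ∞ := fun x => ((hΨle0 x).trans_lt (hA0top x).lt_top).ne
  set a : X → ℝ := fun x => (A0 x).toReal with ha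
  set b : X → ℝ := fun x => (A1 x).toReal with hb
  set ψ : X → ℝ := fun x => (Ψ x).toReal with hψ
  have hb0 : ∀ j, 0 ≤ b j := fun j => ENNReal.toReal_nonneg
  have hψ0 : ∀ j, 0 ≤ ψ j := fun j => ENNReal.toReal_nonneg
  have hb1 : ∀ j, b j ≤ 1 := by
    intro j
    rw [hb]
    calc (A1 j).toReal ≤ (1 : ℝ≥0∞).toReal := ENNReal.toReal_mono ENNReal.one_ne_top (hA1le1 j)
    _ = 1 := by simp
  set cap : X → X → ℝ := fun i j => if i = j then (if R i i then 0 else ψ i)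
    else (if R i j then 0 else 2) with hcap
  have hcap0 : ∀ i j, 0 ≤ cap i j := by
    intro i j; rw [hcap]
    dsimp only
    split_ifs <;> first | exact le_refl 0 | exact hψ0 _ | norm_num
  -- the goal, reformulated
  show ∀ S : Finset X, ∑ i ∈ S, a i ≤ ∑ j, min (b j) (∑ i ∈ S, cap i j)
  intro S
  have hmemL : ∀ (T : Finset X) (j : X), j ∈ lowerContourCompl R T ↔ ∃ s ∈ T, ¬ R s j := by
    intro T j; unfold lowerContourCompl; rw [Finset.mem_filter]; simp
  set L : Finset X := lowerContourCompl R S with hL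
  set Od : X → Prop := fun j => ∃ i ∈ S, i ≠ j ∧ ¬ R i j with hOd
  have hcapS0 : ∀ j, 0 ≤ ∑ i ∈ S, cap i j := fun j => Finset.sum_nonneg fun i _ => hcap0 i j
  have hOd_cap : ∀ j, Od j → (2:ℝ) ≤ ∑ i ∈ S, cap i j := by
    intro j hj
    obtain ⟨i, hiS, hij, hnR⟩ := hj
    have hv : cap i j = 2 := by rw [hcap]; dsimp only; rw [if_neg hij, if_neg hnR]
    calc (2:ℝ) = cap i j := hv.symm
    _ ≤ ∑ i ∈ S, cap i j :=
      Finset.single_le_sum (f := fun i => cap i j) (fun k _ => hcap0 k j) hiS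
  have hdiagonly : ∀ j ∈ L, ¬ Od j → (∑ i ∈ S, cap i j) = ψ j ∧ j ∈ S ∧ ¬ R j j := by
    intro j hjL hnOd
    obtain ⟨s, hsS, hsnR⟩ := (hmemL S j).mp hjL
    have hsj : s = j := by
      by_contra hne
      exact hnOd ⟨s, hsS, hne, hsnR⟩
    subst hsj
    refine ⟨?_, hsS, hsnR⟩
    rw [Finset.sum_eq_single_of_mem s hsS]
    · rw [hcap]; dsimp only; rw [if_pos rfl, if_neg hsnR]
    · intro i hiS hine
      rw [hcap]; dsimp only; rw [if_neg hine]
      have : R i s := by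
        by_contra hnR
        exact hnOd ⟨i, hiS, hine, hnR⟩
      rw [if_pos this]
  set Λ' : Finset X := L.filter (fun j => ¬ Od j ∧ ψ j < b j) with hΛ'
  set Λ : Finset X := L \ Λ' with hΛdef
  have hΛ'val : ∀ j ∈ Λ', min (b j) (∑ i ∈ S, cap i j) = ψ j := by
    intro j hj
    rw [hΛ', Finset.mem_filter] at hj
    obtain ⟨hjL, hnOd, hlt⟩ := hj
    rw [(hdiagonly j hjL hnOd).1]
    exact min_eq_right hlt.le
  have hΛval : ∀ j ∈ Λ, min (b j) (∑ i ∈ S, cap i j) = b j := by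
    intro j hj
    rw [hΛdef, Finset.mem_sdiff] at hj
    obtain ⟨hjL, hjn⟩ := hj
    by_cases hOdj : Od j
    · refine min_eq_left ?_
      calc b j ≤ 1 := hb1 j
      _ ≤ 2 := by norm_num
      _ ≤ _ := hOd_cap j hOdj
    · have hnlt : ¬ ψ j < b j := by
        intro hlt
        exact hjn (by rw [hΛ', Finset.mem_filter]; exact ⟨hjL, hOdj, hlt⟩)
      rw [(hdiagonly j hjL hOdj).1]
      exact min_eq_left (not_lt.mp hnlt)
  have hdisj : Disjoint Λ Λ' := Finset.sdiff_disjoint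
  have hunion : Λ ∪ Λ' = L := Finset.sdiff_union_of_subset (Finset.filter_subset _ _)
  have hkey : ∑ i ∈ S, a i ≤ (∑ j ∈ Λ, b j) + ∑ j ∈ Λ', ψ j := by
    have hΛ'S : Λ' ⊆ S := by
      intro j hj
      rw [hΛ', Finset.mem_filter] at hj
      exact (hdiagonly j hj.1 hj.2.1).2.1
    by_cases hemp : Λ' = ∅
    · have hΛL : Λ = L := by rw [hΛdef, hemp]; simp
      have := h1 S
      rw [← hL] at this
      have htr : (∑ x ∈ S, A0 x).toReal ≤ (∑ x ∈ L, A1 x).toReal := by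
        refine ENNReal.toReal_mono ?_ this
        exact (ENNReal.sum_lt_top.mpr fun x _ => (hA1top x).lt_top).ne
      rw [ENNReal.toReal_sum (fun x _ => hA0top x), ENNReal.toReal_sum (fun x _ => hA1top x)] at htr
      rw [hemp, hΛL]
      simpa using htr
    · have hne : Λ'.Nonempty := Finset.nonempty_iff_ne_empty.mpr hemp
      have herase : ∀ x' ∈ Λ', (lowerContourCompl R {x'}).erase x' ⊆ Λ := by
        intro x' hx' s hs
        rw [Finset.mem_erase] at hs
        obtain ⟨hsx, hsL⟩ := hs
        obtain ⟨w, hw, hwnR⟩ := (hmemL {x'} s).mp hsL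
        rw [Finset.mem_singleton] at hw
        subst hw
        rw [hΛdef, Finset.mem_sdiff]
        constructor
        · rw [hL, hmemL]
          exact ⟨w, hΛ'S hx', hwnR⟩
        · intro hsΛ'
          rw [hΛ', Finset.mem_filter] at hsΛ'
          exact hsΛ'.2.1 ⟨w, hΛ'S hx', fun h => hsx (h.symm ▸ rfl), hwnR⟩
      have hsub : lowerContourCompl R (S \ Λ') ⊆ Λ := by
        intro x hx
        obtain ⟨s, hsS, hsnR⟩ := (hmemL (S \ Λ') x).mp hx
        rw [Finset.mem_sdiff] at hsS
        rw [hΛdef, Finset.mem_sdiff]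
        constructor
        · rw [hL, hmemL]
          exact ⟨s, hsS.1, hsnR⟩
        · intro hxΛ'
          rw [hΛ', Finset.mem_filter] at hxΛ'
          have hsx : s ≠ x := by
            intro h
            subst h
            exact hsS.2 (by rw [hΛ', Finset.mem_filter]; exact hxΛ')
          exact hxΛ'.2.1 ⟨s, hsS.1, hsx, hsnR⟩
      have := h2 S Λ Λ' hdisj (by rw [hunion]) hne hΛ'S herase hsub
      have htr : (∑ x ∈ S, A0 x).toReal
          ≤ ((∑ x ∈ Λ, A1 x) + ∑ x ∈ Λ', Ψ x).toReal := by
        refine ENNReal.toReal_mono ?_ this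
        refine (ENNReal.add_lt_top.mpr ⟨?_, ?_⟩).ne
        · exact ENNReal.sum_lt_top.mpr fun x _ => (hA1top x).lt_top
        · exact ENNReal.sum_lt_top.mpr fun x _ => (hΨtop x).lt_top
      rw [ENNReal.toReal_add
          (ENNReal.sum_lt_top.mpr fun x _ => (hA1top x).lt_top).ne
          (ENNReal.sum_lt_top.mpr fun x _ => (hΨtop x).lt_top).ne,
        ENNReal.toReal_sum (fun x _ => hA0top x),
        ENNReal.toReal_sum (fun x _ => hA1top x),
        ENNReal.toReal_sum (fun x _ => hΨtop x)] at htr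
      exact htr
  calc ∑ i ∈ S, a i ≤ (∑ j ∈ Λ, b j) + ∑ j ∈ Λ', ψ j := hkey
  _ = (∑ j ∈ Λ, min (b j) (∑ i ∈ S, cap i j)) + ∑ j ∈ Λ', min (b j) (∑ i ∈ S, cap i j) := by
      rw [Finset.sum_congr rfl hΛval, Finset.sum_congr rfl hΛ'val]
  _ = ∑ j ∈ Λ ∪ Λ', min (b j) (∑ i ∈ S, cap i j) := (Finset.sum_union hdisj).symm
  _ ≤ ∑ j, min (b j) (∑ i ∈ S, cap i j) := by
      refine Finset.sum_le_sum_of_subset_of_nonneg (Finset.subset_univ _) ?_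
      intro j _ _
      exact le_min (hb0 j) (hcapS0 j)

end Bridge
end SharpIV

/-- **Theorem 2, sharp observable implications of response-type restrictions
for binary instruments.** Existence of a probability measure on response types consistent
with the data whose instrument-response marginal vanishes on the ruled-out types `R` is
equivalent to the generalized FOSD inequalities (1) together with the tightened
inequalities (2) involving the overlaps `Ψ x`. -/
theorem sharp_response_type_restriction
    {Y : Type*} [MeasurableSpace Y] [Nonempty Y] (μ : Measure Y) [SigmaFinite μ]
    {X : Type*} [Fintype X] [Nonempty X] [DecidableEq X]
    [MeasurableSpace X] [MeasurableSingletonClass X]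
    (φ : Fin 2 → X → Y → NNReal) (hφ : ∀ k x, Measurable (φ k x))
    (hmass : ∀ k : Fin 2, ∑ x : X, ∫⁻ y, (φ k x y : ℝ≥0∞) ∂μ = 1)
    (R : X → X → Prop) [DecidableRel R] :
    (∃ g : Measure ((Fin 2 → X) × (X → Y)), IsProbabilityMeasure g ∧
      (∀ (k : Fin 2) (x : X) (B : Set Y), MeasurableSet B →
        g {t | t.1 k = x ∧ t.2 x ∈ B} = ∫⁻ y in B, (φ k x y : ℝ≥0∞) ∂μ) ∧
      (∀ tz : Fin 2 → X, R (tz 0) (tz 1) → g {t | t.1 = tz} = 0))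
    ↔
    ((∀ S : Finset X,
        ∑ x ∈ S, ∫⁻ y, (φ 0 x y : ℝ≥0∞) ∂μ ≤
          ∑ x' ∈ lowerContourCompl R S, ∫⁻ y, (φ 1 x' y : ℝ≥0∞) ∂μ) ∧
      (∀ S Λ Λ' : Finset X, Disjoint Λ Λ' → Λ ∪ Λ' = lowerContourCompl R S →
        Λ'.Nonempty → Λ' ⊆ S →
        (∀ x' ∈ Λ', (lowerContourCompl R {x'}).erase x' ⊆ Λ) →
        lowerContourCompl R (S \ Λ') ⊆ Λ →
        ∑ x ∈ S, ∫⁻ y, (φ 0 x y : ℝ≥0∞) ∂μ ≤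
          (∑ x ∈ Λ, ∫⁻ y, (φ 1 x y : ℝ≥0∞) ∂μ) +
            ∑ x ∈ Λ', ∫⁻ y, ((min (φ 0 x y) (φ 1 x y) : NNReal) : ℝ≥0∞) ∂μ)) := by
  constructor
  · rintro ⟨g, hgprob, hgcons, hgnull⟩
    classical
    have hq0 : ∀ x : X, ∑ x1 : X, g {t | t.1 = ![x, x1]} = ∫⁻ y, (φ 0 x y : ℝ≥0∞) ∂μ := by
      intro x
      have h := SharpIV.decomp0 μ φ g hgcons x MeasurableSet.univ
      simp only [Set.mem_univ, and_true] at h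
      rw [Measure.restrict_univ] at h
      exact h
    have hq1 : ∀ x : X, ∑ x0 : X, g {t | t.1 = ![x0, x]} = ∫⁻ y, (φ 1 x y : ℝ≥0∞) ∂μ := by
      intro x
      have h := SharpIV.decomp1 μ φ g hgcons x MeasurableSet.univ
      simp only [Set.mem_univ, and_true] at h
      rw [Measure.restrict_univ] at h
      exact h
    have hqR : ∀ x0 x1, R x0 x1 → g {t | t.1 = ![x0, x1]} = 0 := by
      intro x0 x1 hR
      exact hgnull ![x0, x1] (by simpa using hR)
    have hmemL : ∀ (T : Finset X) (j : X), j ∈ lowerContourCompl R T ↔ ∃ s ∈ T, ¬ R s j := by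
      intro T j; unfold lowerContourCompl; rw [Finset.mem_filter]; simp
    constructor
    · intro S
      have e1 : ∑ x ∈ S, ∫⁻ y, (φ 0 x y : ℝ≥0∞) ∂μ
          = ∑ x1 : X, ∑ x ∈ S, g {t | t.1 = ![x, x1]} := by
        rw [Finset.sum_comm]
        exact Finset.sum_congr rfl fun x _ => (hq0 x).symm
      rw [e1]
      have e2 : ∑ x1 : X, ∑ x ∈ S, g {t | t.1 = ![x, x1]}
          = ∑ x1 ∈ lowerContourCompl R S, ∑ x ∈ S, g {t | t.1 = ![x, x1]} := by
        symm
        apply Finset.sum_subset (Finset.subset_univ _)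
        intro x1 _ hx1
        apply Finset.sum_eq_zero
        intro x hx
        apply hqR
        by_contra hnR
        exact hx1 ((hmemL S x1).mpr ⟨x, hx, hnR⟩)
      rw [e2]
      refine Finset.sum_le_sum fun x1 hx1 => ?_
      calc ∑ x ∈ S, g {t | t.1 = ![x, x1]}
          ≤ ∑ x : X, g {t | t.1 = ![x, x1]} :=
            Finset.sum_le_sum_of_subset (Finset.subset_univ S)
      _ = ∫⁻ y, (φ 1 x1 y : ℝ≥0∞) ∂μ := hq1 x1
    · intro S Λ Λ' hdisj hunion hne hΛ'S herase hsub
      have hRout : ∀ x' ∈ Λ', ∀ x ∈ S, x ≠ x' → R x x' := by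
        intro x' hx' x hx hnex
        by_contra hnR
        by_cases hxΛ' : x ∈ Λ'
        · have hmem : x' ∈ (lowerContourCompl R {x}).erase x := by
            rw [Finset.mem_erase]
            refine ⟨fun h => hnex h.symm, ?_⟩
            rw [hmemL]
            exact ⟨x, Finset.mem_singleton_self x, hnR⟩
          exact (Finset.disjoint_right.mp hdisj) hx' (herase x hxΛ' hmem)
        · have hmem : x' ∈ lowerContourCompl R (S \ Λ') := by
            rw [hmemL]
            exact ⟨x, Finset.mem_sdiff.mpr ⟨hx, hxΛ'⟩, hnR⟩
          exact (Finset.disjoint_right.mp hdisj) hx' (hsub hmem)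
      have e1 : ∑ x ∈ S, ∫⁻ y, (φ 0 x y : ℝ≥0∞) ∂μ
          = ∑ x1 : X, ∑ x ∈ S, g {t | t.1 = ![x, x1]} := by
        rw [Finset.sum_comm]
        exact Finset.sum_congr rfl fun x _ => (hq0 x).symm
      rw [e1]
      have e2 : ∑ x1 : X, ∑ x ∈ S, g {t | t.1 = ![x, x1]}
          = ∑ x1 ∈ Λ ∪ Λ', ∑ x ∈ S, g {t | t.1 = ![x, x1]} := by
        symm
        apply Finset.sum_subset (Finset.subset_univ _)
        intro x1 _ hx1
        rw [hunion] at hx1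
        apply Finset.sum_eq_zero
        intro x hx
        apply hqR
        by_contra hnR
        exact hx1 ((hmemL S x1).mpr ⟨x, hx, hnR⟩)
      rw [e2, Finset.sum_union hdisj]
      refine add_le_add ?_ ?_
      · refine Finset.sum_le_sum fun x1 hx1 => ?_
        calc ∑ x ∈ S, g {t | t.1 = ![x, x1]}
            ≤ ∑ x : X, g {t | t.1 = ![x, x1]} :=
              Finset.sum_le_sum_of_subset (Finset.subset_univ S)
        _ = ∫⁻ y, (φ 1 x1 y : ℝ≥0∞) ∂μ := hq1 x1
      · refine Finset.sum_le_sum fun x1 hx1 => ?_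
        have hcollapse : ∑ x ∈ S, g {t | t.1 = ![x, x1]} = g {t | t.1 = ![x1, x1]} := by
          apply Finset.sum_eq_single_of_mem x1 (hΛ'S hx1)
          intro x hx hnex
          exact hqR x x1 (hRout x1 hx1 x hx hnex)
        rw [hcollapse]
        exact SharpIV.diag_le_psi μ φ hφ g hgcons x1
  · rintro ⟨h1, h2⟩
    classical
    have hA0le1 : ∀ x : X, (∫⁻ y, (φ 0 x y : ℝ≥0∞) ∂μ) ≤ 1 := by
      intro x; rw [← hmass 0]
      exact Finset.single_le_sum (f := fun x => ∫⁻ y, (φ 0 x y : ℝ≥0∞) ∂μ)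
        (fun i _ => zero_le) (Finset.mem_univ x)
    have hA1le1 : ∀ x : X, (∫⁻ y, (φ 1 x y : ℝ≥0∞) ∂μ) ≤ 1 := by
      intro x; rw [← hmass 1]
      exact Finset.single_le_sum (f := fun x => ∫⁻ y, (φ 1 x y : ℝ≥0∞) ∂μ)
        (fun i _ => zero_le) (Finset.mem_univ x)
    have hA0top : ∀ x : X, (∫⁻ y, (φ 0 x y : ℝ≥0∞) ∂μ) ≠ ∞ :=
      fun x => ((hA0le1 x).trans_lt ENNReal.one_lt_top).ne
    have hA1top : ∀ x : X, (∫⁻ y, (φ 1 x y : ℝ≥0∞) ∂μ) ≠ ∞ :=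
      fun x => ((hA1le1 x).trans_lt ENNReal.one_lt_top).ne
    have hcond := SharpIV.hcond_of_ineqs μ φ hmass R h1 h2
    obtain ⟨m, hm0, hmc, hrow, hcol⟩ := SharpIV.hoffman
      (fun x => (∫⁻ y, (φ 0 x y : ℝ≥0∞) ∂μ).toReal)
      (fun x => (∫⁻ y, (φ 1 x y : ℝ≥0∞) ∂μ).toReal)
      (fun i j => if i = j then
          (if R i i then 0 else (∫⁻ y, ((min (φ 0 i y) (φ 1 i y) : NNReal) : ℝ≥0∞) ∂μ).toReal)
        else (if R i j then 0 else 2))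
      (fun i => ENNReal.toReal_nonneg) (fun j => ENNReal.toReal_nonneg)
      (by
        intro i j
        split_ifs <;> first | exact le_refl 0 | exact ENNReal.toReal_nonneg | norm_num)
      (by
        rw [← ENNReal.toReal_sum (fun x _ => hA0top x), ← ENNReal.toReal_sum (fun x _ => hA1top x)]
        rw [hmass 0, hmass 1])
      hcond
    refine SharpIV.exists_consistent μ φ hφ R m hm0 ?_ ?_ hrow hcol hmass
    · intro i j hR
      have hcz : (if i = j then
          (if R i i then 0 else (∫⁻ y, ((min (φ 0 i y) (φ 1 i y) : NNReal) : ℝ≥0∞) ∂μ).toReal)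
        else (if R i j then 0 else 2)) = 0 := by
        by_cases h : i = j
        · subst h; rw [if_pos rfl, if_pos hR]
        · rw [if_neg h, if_pos hR]
      have := hmc i j
      rw [hcz] at this
      exact le_antisymm this (hm0 i j)
    · intro x
      have := hmc x x
      rw [if_pos rfl] at this
      by_cases h : R x x
      · rw [if_pos h] at this
        exact this.trans ENNReal.toReal_nonneg
      · rw [if_neg h] at this
        exact this
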